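/- Let U, W be finite sets with |U| ≤ |W| and let I(U,W) be the uniform space of injections U → W. Let A₁,…,Aₙ be canonical events, Aᵢ = A_{Sᵢ,Tᵢ,fᵢ}. Define a graph G on [n] by joining i and j iff the matchings (Sᵢ,Tᵢ,fᵢ) and (Sⱼ,Tⱼ,fⱼ) conflict (there is v ∈ Sᵢ ∩ Sⱼ with fᵢ(v) ≠ fⱼ(v), or v ∈ Tᵢ ∩ Tⱼ with fᵢ⁻¹(v) ≠ fⱼ⁻¹(v)). Then G is a negative dependency graph for A₁,…,Aₙ. -/

import Mathlib

open Finset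

section LuSzekelyAux

variable {U W : Type*} [Fintype U] [Fintype W] [DecidableEq U] [DecidableEq W]

/-- Given two functions injective on a finset `s`, there is a permutation of `W`
sending `F x` to `G x` for `x ∈ s` and fixing everything outside the two images. -/
lemma lu_szekely_exists_perm_swap (s : Finset U) (F G : U → W)
    (hF : Set.InjOn F ↑s) (hG : Set.InjOn G ↑s) :
    ∃ e : Equiv.Perm W, (∀ x ∈ s, e (F x) = G x) ∧
      ∀ w, w ∉ s.image F ∪ s.image G → e w = w := by
  classical
  set Tf := s.image F with hTfdef
  set Tg := s.image G with hTgdef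
  have hcard : (Tf \ Tg).card = (Tg \ Tf).card :=
    Finset.card_sdiff_comm (by
      rw [hTfdef, hTgdef, Finset.card_image_of_injOn hF, Finset.card_image_of_injOn hG])
  obtain ⟨c⟩ : Nonempty ((Tg \ Tf : Finset W) ≃ (Tf \ Tg : Finset W)) :=
    ⟨Finset.equivOfCardEq hcard.symm⟩
  set q : W → W := fun w =>
    if h : w ∈ Tf then G ((Finset.mem_image.mp h).choose)
    else if h2 : w ∈ Tg \ Tf then (c ⟨w, h2⟩ : W) else w with hqdef
  have hq1 : ∀ x ∈ s, q (F x) = G x := by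
    intro x hx
    have h : F x ∈ Tf := Finset.mem_image.mpr ⟨x, hx, rfl⟩
    have hspec := (Finset.mem_image.mp h).choose_spec
    have heq : (Finset.mem_image.mp h).choose = x := hF hspec.1 hx hspec.2
    simp only [hqdef, dif_pos h]
    rw [heq]
  have hqTf : ∀ w ∈ Tf, q w ∈ Tg := by
    intro w h
    simp only [hqdef, dif_pos h]
    exact Finset.mem_image.mpr ⟨_, (Finset.mem_image.mp h).choose_spec.1, rfl⟩
  have hqTg : ∀ w (h : w ∈ Tg \ Tf), q w ∈ Tf \ Tg := by
    intro w h
    have hw : w ∉ Tf := (Finset.mem_sdiff.mp h).2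
    simp only [hqdef, dif_neg hw, dif_pos h]
    exact (c ⟨w, h⟩).2
  have hqid : ∀ w, w ∉ Tf ∪ Tg → q w = w := by
    intro w h
    rw [Finset.mem_union] at h
    push_neg at h
    have h2 : ¬ w ∈ Tg \ Tf := fun hc => h.2 (Finset.mem_sdiff.mp hc).1
    simp only [hqdef, dif_neg h.1, dif_neg h2]
  -- helper: q a = q b with a ∈ Tf, b ∉ Tf is impossible
  have key1 : ∀ a b, a ∈ Tf → b ∉ Tf → q a = q b → False := by
    intro a b ha hb hab
    have hqa := hqTf a ha
    by_cases hb2 : b ∈ Tg \ Tf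
    · have hqb := hqTg b hb2
      rw [hab] at hqa
      exact (Finset.mem_sdiff.mp hqb).2 hqa
    · have hqb : q b = b := by simp only [hqdef, dif_neg hb, dif_neg hb2]
      rw [hab, hqb] at hqa
      exact hb2 (Finset.mem_sdiff.mpr ⟨hqa, hb⟩)
  have key2 : ∀ a b, a ∈ Tg \ Tf → b ∉ Tf → b ∉ Tg \ Tf → q a = q b → False := by
    intro a b ha hb hb2 hab
    have hqa := hqTg a ha
    have hqb : q b = b := by simp only [hqdef, dif_neg hb, dif_neg hb2]
    rw [hab, hqb] at hqa
    exact hb (Finset.mem_sdiff.mp hqa).1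
  have hqinj : Function.Injective q := by
    intro a b hab
    by_cases ha : a ∈ Tf
    · by_cases hb : b ∈ Tf
      · have sa := (Finset.mem_image.mp ha).choose_spec
        have sb := (Finset.mem_image.mp hb).choose_spec
        have hab' : G ((Finset.mem_image.mp ha).choose) = G ((Finset.mem_image.mp hb).choose) := by
          simpa only [hqdef, dif_pos ha, dif_pos hb] using hab
        have := hG sa.1 sb.1 hab'
        rw [← sa.2, ← sb.2, this]
      · exact absurd hab (fun h => key1 a b ha hb h)
    · by_cases hb : b ∈ Tf
      · exact absurd hab.symm (fun h => key1 b a hb ha h)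
      · by_cases ha2 : a ∈ Tg \ Tf
        · by_cases hb2 : b ∈ Tg \ Tf
          · have hab' : (c ⟨a, ha2⟩ : W) = (c ⟨b, hb2⟩ : W) := by
              simpa only [hqdef, dif_neg ha, dif_neg hb, dif_pos ha2, dif_pos hb2] using hab
            have := c.injective (Subtype.ext hab')
            exact congrArg Subtype.val this
          · exact absurd hab (fun h => key2 a b ha2 hb hb2 h)
        · by_cases hb2 : b ∈ Tg \ Tf
          · exact absurd hab.symm (fun h => key2 b a hb2 ha ha2 h)
          · have hqa : q a = a := by simp only [hqdef, dif_neg ha, dif_neg ha2]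
            have hqb : q b = b := by simp only [hqdef, dif_neg hb, dif_neg hb2]
            rw [hqa, hqb] at hab
            exact hab
  have hbij : Function.Bijective q := Finite.injective_iff_bijective.mp hqinj
  refine ⟨Equiv.ofBijective q hbij, fun x hx => ?_, fun w hw => ?_⟩
  · exact hq1 x hx
  · exact hqid w hw

/-- Counting lemma: post-composing with a suitable permutation injects one
canonical-event-with-side-condition into another. -/
lemma lu_szekely_card_le_of_perm (s : Finset U) (F G : U → W) (e : Equiv.Perm W)
    (he1 : ∀ x ∈ s, e (F x) = G x)
    (Pr : (U ↪ W) → Prop) [DecidablePred Pr]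
    (hpres : ∀ σ : U ↪ W, (∀ x ∈ s, σ x = F x) → Pr σ → Pr (σ.trans e.toEmbedding)) :
    (univ.filter (fun σ : U ↪ W => (∀ x ∈ s, σ x = F x) ∧ Pr σ)).card ≤
    (univ.filter (fun σ : U ↪ W => (∀ x ∈ s, σ x = G x) ∧ Pr σ)).card := by
  classical
  apply Finset.card_le_card_of_injOn (fun σ => σ.trans e.toEmbedding)
  · intro σ hσ
    simp only [Finset.mem_coe, Finset.mem_filter, Finset.mem_univ, true_and] at hσ ⊢
    obtain ⟨h1, h2⟩ := hσ
    refine ⟨fun x hx => ?_, hpres σ h1 h2⟩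
    simp only [Function.Embedding.trans_apply, Equiv.coe_toEmbedding]
    rw [h1 x hx]
    exact he1 x hx
  · intro a _ b _ hab
    ext x
    have h1 : e (a x) = e (b x) := by
      have := congrArg (fun σ : U ↪ W => σ x) hab
      simpa only [Function.Embedding.trans_apply, Equiv.coe_toEmbedding] using this
    exact e.injective h1

end LuSzekelyAux

/-- Lu–Székely. -/
theorem lu_szekely_negative_dependency
    (U W : Type*) [Fintype U] [Fintype W] [DecidableEq U] [DecidableEq W]
    (hUW : Fintype.card U ≤ Fintype.card W)
    (n : ℕ) (S : Fin n → Finset U) (f : Fin n → U → W)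
    (hf : ∀ i, Set.InjOn (f i) (S i))
    (conflict : Fin n → Fin n → Prop)
    (hconf : ∀ i j, conflict i j ↔
      ((∃ v ∈ S i ∩ S j, f i v ≠ f j v) ∨
       (∃ x ∈ S i, ∃ y ∈ S j, x ≠ y ∧ f i x = f j y)))
    (i : Fin n) (I : Finset (Fin n)) (hI : ∀ j ∈ I, j ≠ i ∧ ¬ conflict i j)
    (hpos : 0 < (Finset.univ.filter
      (fun σ : U ↪ W => ∀ j ∈ I, ¬ ∀ x ∈ S j, σ x = f j x)).card) :
    (Finset.univ.filter (fun σ : U ↪ W =>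
        (∀ x ∈ S i, σ x = f i x) ∧ ∀ j ∈ I, ¬ ∀ x ∈ S j, σ x = f j x)).card *
      (Finset.univ : Finset (U ↪ W)).card ≤
    (Finset.univ.filter (fun σ : U ↪ W => ∀ x ∈ S i, σ x = f i x)).card *
      (Finset.univ.filter (fun σ : U ↪ W => ∀ j ∈ I, ¬ ∀ x ∈ S j, σ x = f j x)).card := by
  classical
  set Pp : (U ↪ W) → Prop := fun σ => ∀ j ∈ I, ¬ ∀ x ∈ S j, σ x = f j x with hPpdef
  letI : Fintype ({x // x ∈ S i} ↪ W) := Fintype.ofFinite _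
  -- restriction map
  set r : (U ↪ W) → ({x // x ∈ S i} ↪ W) :=
    fun σ => ⟨fun x => σ x.1, fun a b h => Subtype.ext (σ.injective h)⟩ with hrdef
  -- extension of an embedding of the subtype to a function on U
  set Gfun : ({x // x ∈ S i} ↪ W) → U → W :=
    fun g u => if h : u ∈ S i then g ⟨u, h⟩ else f i u with hGfundef
  have hGinj : ∀ g, Set.InjOn (Gfun g) ↑(S i) := by
    intro g x hx y hy h
    simp only [hGfundef, dif_pos (Finset.mem_coe.mp hx), dif_pos (Finset.mem_coe.mp hy)] at h
    have := g.injective h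
    exact congrArg Subtype.val this
  have hkey : ∀ (g : {x // x ∈ S i} ↪ W) (σ : U ↪ W),
      r σ = g ↔ ∀ x ∈ S i, σ x = Gfun g x := by
    intro g σ
    constructor
    · intro h x hx
      simp only [hGfundef, dif_pos hx]
      rw [← h]
      rfl
    · intro h
      ext x
      have := h x.1 x.2
      simp only [hGfundef, dif_pos x.2] at this
      exact this
  -- the embedding corresponding to f i itself
  set fhat : {x // x ∈ S i} ↪ W :=
    ⟨fun x => f i x.1, fun a b h => Subtype.ext (hf i a.2 b.2 h)⟩ with hfhatdef
  have hGf : Gfun fhat = f i := by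
    funext u
    by_cases h : u ∈ S i <;> simp [hGfundef, hfhatdef, h]
    rfl
  -- fiber descriptions
  have hfib : ∀ g : {x // x ∈ S i} ↪ W,
      (univ.filter (fun σ : U ↪ W => r σ = g)) =
      (univ.filter (fun σ : U ↪ W => ∀ x ∈ S i, σ x = Gfun g x)) := by
    intro g
    ext σ
    simp only [Finset.mem_filter, Finset.mem_univ, true_and]
    exact hkey g σ
  have hfibP : ∀ g : {x // x ∈ S i} ↪ W,
      (univ.filter (fun σ : U ↪ W => Pp σ ∧ r σ = g)) =
      (univ.filter (fun σ : U ↪ W => (∀ x ∈ S i, σ x = Gfun g x) ∧ Pp σ)) := by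
    intro g
    ext σ
    simp only [Finset.mem_filter, Finset.mem_univ, true_and]
    exact ⟨fun ⟨a, b⟩ => ⟨(hkey g σ).mp b, a⟩, fun ⟨a, b⟩ => ⟨b, (hkey g σ).mpr a⟩⟩
  -- rewrite the three filters appearing in the goal
  have eA : (univ.filter (fun σ : U ↪ W => ∀ x ∈ S i, σ x = f i x)) =
      (univ.filter (fun σ : U ↪ W => r σ = fhat)) := by
    rw [hfib fhat, hGf]
  have eAB : (univ.filter (fun σ : U ↪ W =>
        (∀ x ∈ S i, σ x = f i x) ∧ ∀ j ∈ I, ¬ ∀ x ∈ S j, σ x = f j x)) =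
      (univ.filter (fun σ : U ↪ W => Pp σ ∧ r σ = fhat)) := by
    rw [hfibP fhat, hGf]
  have hNle : ∀ (F G : U → W), Set.InjOn F ↑(S i) → Set.InjOn G ↑(S i) →
      (univ.filter (fun σ : U ↪ W => ∀ x ∈ S i, σ x = F x)).card ≤
      (univ.filter (fun σ : U ↪ W => ∀ x ∈ S i, σ x = G x)).card := by
    intro F G hF hG
    obtain ⟨e, he1, -⟩ := lu_szekely_exists_perm_swap (S i) F G hF hG
    have := lu_szekely_card_le_of_perm (S i) F G e he1 (fun _ => True)
      (fun σ _ _ => trivial)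
    simpa using this
  -- fiberwise sums
  have hsum_univ : (univ : Finset (U ↪ W)).card =
      ∑ g : {x // x ∈ S i} ↪ W, (univ.filter (fun σ : U ↪ W => r σ = g)).card :=
    Finset.card_eq_sum_card_fiberwise (fun σ _ => Finset.mem_univ (r σ))
  have hsum_B : (univ.filter Pp).card =
      ∑ g : {x // x ∈ S i} ↪ W, (univ.filter (fun σ : U ↪ W => Pp σ ∧ r σ = g)).card := by
    rw [Finset.card_eq_sum_card_fiberwise
      (f := r) (t := univ) (fun σ _ => Finset.mem_univ (r σ))]
    exact Finset.sum_congr rfl fun g _ => by rw [Finset.filter_filter]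
  rw [eA, eAB, hsum_univ, hsum_B, Finset.mul_sum, Finset.mul_sum]
  apply Finset.sum_le_sum
  intro g _
  obtain ⟨e, he1, he2⟩ := lu_szekely_exists_perm_swap (S i) (f i) (Gfun g) (hf i) (hGinj g)
  -- preservation of the avoiding property
  have hpres : ∀ σ : U ↪ W, (∀ x ∈ S i, σ x = f i x) → Pp σ → Pp (σ.trans e.toEmbedding) := by
    intro σ hσF hPσ j hjI hall
    have h' := hPσ j hjI
    push_neg at h'
    obtain ⟨y, hyj, hy⟩ := h'
    have hc := (hI j hjI).2
    rw [hconf i j] at hc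
    push_neg at hc
    obtain ⟨hc1, hc2⟩ := hc
    have hej : e (σ y) = f j y := by
      have := hall y hyj
      simpa only [Function.Embedding.trans_apply, Equiv.coe_toEmbedding] using this
    have hne : σ y ≠ e (σ y) := by rw [hej]; exact hy
    by_cases h1 : σ y ∈ (S i).image (f i)
    · obtain ⟨x, hx, hFx⟩ := Finset.mem_image.mp h1
      have hxy : x = y := σ.injective (by rw [hσF x hx, hFx])
      subst hxy
      have hfe : f i x = f j x := hc1 x (Finset.mem_inter.mpr ⟨hx, hyj⟩)
      exact hy (by rw [hσF x hx, hfe])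
    · by_cases h2 : σ y ∈ (S i).image (Gfun g)
      · have hin : e (σ y) ∈ (S i).image (f i) ∪ (S i).image (Gfun g) := by
          by_contra hcon
          have hfix := he2 _ hcon
          exact hne (e.injective hfix).symm
        have hnotG : e (σ y) ∉ (S i).image (Gfun g) := by
          intro hmem
          obtain ⟨x, hx, hGx⟩ := Finset.mem_image.mp hmem
          rw [← he1 x hx] at hGx
          have : f i x = σ y := e.injective hGx
          exact h1 (Finset.mem_image.mpr ⟨x, hx, this⟩)
        have hinF : e (σ y) ∈ (S i).image (f i) := by
          rcases Finset.mem_union.mp hin with h | h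
          · exact h
          · exact absurd h hnotG
        obtain ⟨x, hx, hFx⟩ := Finset.mem_image.mp hinF
        by_cases hxy : x = y
        · subst hxy
          exact hy (by rw [hσF x hx, hFx, hej])
        · exact hc2 x hx y hyj hxy (by rw [hFx, hej])
      · have hfix : e (σ y) = σ y := by
          apply he2
          rw [Finset.mem_union]
          push_neg
          exact ⟨h1, h2⟩
        exact hne hfix.symm
  have hMle : (univ.filter (fun σ : U ↪ W => Pp σ ∧ r σ = fhat)).card ≤
      (univ.filter (fun σ : U ↪ W => Pp σ ∧ r σ = g)).card := by
    rw [hfibP fhat, hfibP g, hGf]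
    exact lu_szekely_card_le_of_perm (S i) (f i) (Gfun g) e he1 Pp hpres
  have hNeq : (univ.filter (fun σ : U ↪ W => r σ = g)).card =
      (univ.filter (fun σ : U ↪ W => r σ = fhat)).card := by
    rw [hfib g, hfib fhat, hGf]
    exact le_antisymm (hNle (Gfun g) (f i) (hGinj g) (hf i))
      (hNle (f i) (Gfun g) (hf i) (hGinj g))
  rw [hNeq]
  calc (univ.filter (fun σ : U ↪ W => Pp σ ∧ r σ = fhat)).card *
        (univ.filter (fun σ : U ↪ W => r σ = fhat)).card
      ≤ (univ.filter (fun σ : U ↪ W => Pp σ ∧ r σ = g)).card *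
        (univ.filter (fun σ : U ↪ W => r σ = fhat)).card :=
        Nat.mul_le_mul_right _ hMle
    _ = (univ.filter (fun σ : U ↪ W => r σ = fhat)).card *
        (univ.filter (fun σ : U ↪ W => Pp σ ∧ r σ = g)).card := Nat.mul_comm _ _
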